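/- Let f : {0,1}^n → ℝ be a submodular function with Lovász extension f̂. Let x ∈ [0,1]^n and let P be any permutation of [n] consistent with x. Then the vector g(x) ∈ ℝ^n defined by g(x)_{P_j} = f(P[j]) − f(P[j−1]) for 1 ≤ j ≤ n is a subgradient of f̂ at x, i.e. f̂(y) − f̂(x) ≥ ⟨g(x), y − x⟩ for all y ∈ [0,1]^n. -/

import Mathlib

/-- A set function `f` on subsets of `[n]` is submodular if
`f (S ∩ T) + f (S ∪ T) ≤ f S + f T` for all `S, T`. -/
def Submodular (n : ℕ) (f : Finset (Fin n) → ℝ) : Prop :=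
  ∀ S T : Finset (Fin n), f (S ∩ T) + f (S ∪ T) ≤ f S + f T

/-- `P[j]`: the set of the first `j` elements of the permutation `P` (0-indexed internally). -/
def prefixSet {n : ℕ} (P : Equiv.Perm (Fin n)) (j : ℕ) : Finset (Fin n) :=
  (Finset.univ.filter fun i : Fin n => (i : ℕ) < j).image P

/-- `P` is consistent with `x` if `x (P 0) ≥ x (P 1) ≥ ⋯ ≥ x (P (n-1))`. -/
def IsConsistent {n : ℕ} (x : Fin n → ℝ) (P : Equiv.Perm (Fin n)) : Prop :=
  ∀ i j : Fin n, i ≤ j → x (P j) ≤ x (P i)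

/-- The value `∑_{j=1}^n (f(P[j]) - f(P[j-1])) x_{P_j}` of the Lovász extension computed
through the permutation `P`. -/
def lovaszSum {n : ℕ} (f : Finset (Fin n) → ℝ) (P : Equiv.Perm (Fin n)) (x : Fin n → ℝ) : ℝ :=
  ∑ j : Fin n, (f (prefixSet P ((j : ℕ) + 1)) - f (prefixSet P (j : ℕ))) * x (P j)

/-- The subgradient vector associated with a permutation `P`:
`g^P_{P_j} = f(P[j]) - f(P[j-1])`. -/
noncomputable def gradP {n : ℕ} (f : Finset (Fin n) → ℝ) (P : Equiv.Perm (Fin n)) :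
    Fin n → ℝ :=
  fun i => f (prefixSet P ((P.symm i : ℕ) + 1)) - f (prefixSet P (P.symm i : ℕ))

lemma prefixSet_zero {n : ℕ} (P : Equiv.Perm (Fin n)) : prefixSet P 0 = ∅ := by
  simp [prefixSet]

lemma prefixSet_of_le {n : ℕ} (P : Equiv.Perm (Fin n)) {j : ℕ} (h : n ≤ j) :
    prefixSet P j = Finset.univ := by
  have : (Finset.univ.filter fun i : Fin n => (i : ℕ) < j) = Finset.univ := by
    apply Finset.filter_true_of_mem
    intro i _
    exact lt_of_lt_of_le i.isLt h
  rw [prefixSet, this, Finset.image_univ_equiv]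

lemma prefixSet_succ {n : ℕ} (P : Equiv.Perm (Fin n)) (j : Fin n) :
    prefixSet P ((j : ℕ) + 1) = insert (P j) (prefixSet P (j : ℕ)) := by
  have : (Finset.univ.filter fun i : Fin n => (i : ℕ) < (j : ℕ) + 1)
      = insert j (Finset.univ.filter fun i : Fin n => (i : ℕ) < (j : ℕ)) := by
    ext i
    simp [Nat.lt_succ_iff_lt_or_eq, Fin.ext_iff]
    rw [Fin.le_iff_val_le_val, Fin.lt_iff_val_lt_val]; omega
  rw [prefixSet, this, Finset.image_insert, prefixSet]

lemma not_mem_prefixSet {n : ℕ} (P : Equiv.Perm (Fin n)) (j : Fin n) :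
    P j ∉ prefixSet P (j : ℕ) := by
  simp only [prefixSet, Finset.mem_image, Finset.mem_filter, Finset.mem_univ, true_and]
  rintro ⟨i, hi, hPi⟩
  have : i = j := P.injective hPi
  simp [this] at hi

lemma prefixSet_subset_succ {n : ℕ} (P : Equiv.Perm (Fin n)) (j : Fin n) :
    prefixSet P (j : ℕ) ⊆ prefixSet P ((j : ℕ) + 1) := by
  rw [prefixSet_succ]
  exact Finset.subset_insert _ _

/-- Key lemma: the gradient vector lies in the (shifted) base polytope. -/
lemma sum_gradP_le {n : ℕ} (f : Finset (Fin n) → ℝ) (hf : Submodular n f)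
    (P : Equiv.Perm (Fin n)) (S : Finset (Fin n)) :
    ∑ i ∈ S, gradP f P i ≤ f S - f ∅ := by
  have h1 : ∑ i ∈ S, gradP f P i
      = ∑ j : Fin n, (if P j ∈ S then gradP f P (P j) else 0) := by
    rw [Equiv.sum_comp P (fun i => if i ∈ S then gradP f P i else 0),
      Finset.sum_ite_mem, Finset.univ_inter]
  have h2 : ∀ j : Fin n, (if P j ∈ S then gradP f P (P j) else 0)
      ≤ f (S ∩ prefixSet P ((j : ℕ) + 1)) - f (S ∩ prefixSet P (j : ℕ)) := by
    intro j
    by_cases hjS : P j ∈ S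
    · rw [if_pos hjS]
      have hg : gradP f P (P j) = f (prefixSet P ((j : ℕ) + 1)) - f (prefixSet P (j : ℕ)) := by
        simp [gradP]
      have hsub := hf (S ∩ prefixSet P ((j : ℕ) + 1)) (prefixSet P (j : ℕ))
      have hcap : S ∩ prefixSet P ((j : ℕ) + 1) ∩ prefixSet P (j : ℕ)
          = S ∩ prefixSet P (j : ℕ) := by
        rw [Finset.inter_assoc, Finset.inter_eq_right.mpr (prefixSet_subset_succ P j)]
      have hcup : S ∩ prefixSet P ((j : ℕ) + 1) ∪ prefixSet P (j : ℕ)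
          = prefixSet P ((j : ℕ) + 1) := by
        rw [prefixSet_succ, Finset.inter_insert_of_mem hjS, Finset.insert_union,
          Finset.union_eq_right.mpr Finset.inter_subset_right]
      rw [hcap, hcup] at hsub
      rw [hg]
      linarith
    · rw [if_neg hjS]
      have : S ∩ prefixSet P ((j : ℕ) + 1) = S ∩ prefixSet P (j : ℕ) := by
        rw [prefixSet_succ, Finset.inter_insert_of_notMem hjS]
      rw [this]
      simp
  calc ∑ i ∈ S, gradP f P i
      ≤ ∑ j : Fin n, (f (S ∩ prefixSet P ((j : ℕ) + 1)) - f (S ∩ prefixSet P (j : ℕ))) := by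
        rw [h1]; exact Finset.sum_le_sum fun j _ => h2 j
    _ = ∑ j ∈ Finset.range n,
          (f (S ∩ prefixSet P (j + 1)) - f (S ∩ prefixSet P j)) := by
        exact Fin.sum_univ_eq_sum_range (fun j => f (S ∩ prefixSet P (j + 1)) - f (S ∩ prefixSet P j)) n
    _ = f (S ∩ prefixSet P n) - f (S ∩ prefixSet P 0) :=
        Finset.sum_range_sub (fun j => f (S ∩ prefixSet P j)) n
    _ = f S - f ∅ := by
        rw [prefixSet_zero, prefixSet_of_le P (le_refl n), Finset.inter_univ,
          Finset.inter_empty]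

/-- Abel-summation type lemma. -/
lemma abel_ge {c : ℝ} (D a : ℕ → ℝ) (hD0 : D 0 = c) (hD : ∀ j, c ≤ D j)
    (ha : ∀ j, a (j + 1) ≤ a j) (ha0 : ∀ j, 0 ≤ a j) (m : ℕ) :
    (D m - c) * a m ≤ ∑ j ∈ Finset.range m, (D (j + 1) - D j) * a j := by
  induction m with
  | zero => simp [hD0]
  | succ m ih =>
    rw [Finset.sum_range_succ]
    have h1 : (D (m + 1) - c) * a (m + 1) ≤ (D (m + 1) - c) * a m :=
      mul_le_mul_of_nonneg_left (ha m) (by linarith [hD (m + 1)])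
    nlinarith [ih]

lemma lovasz_eq_inner {n : ℕ} (f : Finset (Fin n) → ℝ) (P : Equiv.Perm (Fin n))
    (x : Fin n → ℝ) : lovaszSum f P x = ∑ i, gradP f P i * x i := by
  rw [← Equiv.sum_comp P (fun i => gradP f P i * x i)]
  unfold lovaszSum gradP
  simp

/-- Main inequality: for any `y` and permutation `Q` consistent with `y`,
the Lovász sum dominates the inner product with `gradP f P`. -/
lemma inner_le_lovasz {n : ℕ} (f : Finset (Fin n) → ℝ) (hf : Submodular n f)
    (P Q : Equiv.Perm (Fin n)) (y : Fin n → ℝ)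
    (hy : y ∈ Set.Icc (0 : Fin n → ℝ) 1) (hQ : IsConsistent y Q) :
    ∑ i, gradP f P i * y i ≤ lovaszSum f Q y := by
  set a : ℕ → ℝ := fun j => if h : j < n then y (Q ⟨j, h⟩) else 0 with ha_def
  set D : ℕ → ℝ := fun j => f (prefixSet Q j) - ∑ i ∈ prefixSet Q j, gradP f P i with hD_def
  have hy0 : ∀ i, 0 ≤ y i := fun i => hy.1 i
  have hD0 : D 0 = f ∅ := by simp [hD_def, prefixSet_zero]
  have hD : ∀ j, f ∅ ≤ D j := by
    intro j
    have := sum_gradP_le f hf P (prefixSet Q j)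
    simp only [hD_def]
    linarith
  have ha : ∀ j, a (j + 1) ≤ a j := by
    intro j
    by_cases h1 : j + 1 < n
    · have h2 : j < n := by omega
      simp only [ha_def, dif_pos h1, dif_pos h2]
      exact hQ ⟨j, h2⟩ ⟨j + 1, h1⟩ (by simp [Fin.le_def])
    · by_cases h2 : j < n
      · simp only [ha_def, dif_neg h1, dif_pos h2]
        exact hy0 _
      · simp [ha_def, dif_neg h1, dif_neg h2]
  have ha0 : ∀ j, 0 ≤ a j := by
    intro j
    by_cases h : j < n
    · simp only [ha_def, dif_pos h]; exact hy0 _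
    · simp [ha_def, dif_neg h]
  have key := abel_ge D a hD0 hD ha ha0 n
  have han : a n = 0 := by simp [ha_def]
  rw [han, mul_zero] at key
  have hsum : ∑ j ∈ Finset.range n, (D (j + 1) - D j) * a j
      = lovaszSum f Q y - ∑ i, gradP f P i * y i := by
    rw [← Fin.sum_univ_eq_sum_range (fun j => (D (j + 1) - D j) * a j) n]
    have : ∀ j : Fin n, (D ((j : ℕ) + 1) - D (j : ℕ)) * a (j : ℕ)
        = (f (prefixSet Q ((j : ℕ) + 1)) - f (prefixSet Q (j : ℕ))) * y (Q j)
          - gradP f P (Q j) * y (Q j) := by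
      intro j
      have hins : ∑ i ∈ prefixSet Q ((j : ℕ) + 1), gradP f P i
          = gradP f P (Q j) + ∑ i ∈ prefixSet Q (j : ℕ), gradP f P i := by
        rw [prefixSet_succ, Finset.sum_insert (not_mem_prefixSet Q j)]
      have haj : a (j : ℕ) = y (Q j) := by
        simp [ha_def, dif_pos j.isLt]
      simp only [hD_def, hins, haj]
      ring
    rw [Finset.sum_congr rfl (fun j _ => this j)]
    rw [Finset.sum_sub_distrib]
    congr 1
    rw [← Equiv.sum_comp Q (fun i => gradP f P i * y i)]
  rw [hsum] at key
  linarith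

/-- For any `x ∈ [0,1]^n` and any permutation `P` consistent with `x`, the vector
`g(x)` with `g(x)_{P_j} = f(P[j]) - f(P[j-1])` is a subgradient of the Lovász extension
at `x`. -/
theorem stmt3 (n : ℕ) (hn : 1 ≤ n) (f : Finset (Fin n) → ℝ) (hf : Submodular n f)
    (fhat : (Fin n → ℝ) → ℝ)
    (hfhat : ∀ x ∈ Set.Icc (0 : Fin n → ℝ) 1, ∀ P : Equiv.Perm (Fin n),
      IsConsistent x P → fhat x = lovaszSum f P x)
    (x : Fin n → ℝ) (hx : x ∈ Set.Icc (0 : Fin n → ℝ) 1)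
    (P : Equiv.Perm (Fin n)) (hP : IsConsistent x P) :
    ∀ y ∈ Set.Icc (0 : Fin n → ℝ) 1,
      fhat y - fhat x ≥ ∑ i, gradP f P i * (y i - x i) := by
  intro y hy
  -- build a permutation consistent with y
  set Q : Equiv.Perm (Fin n) := (Fin.revPerm).trans (Tuple.sort y) with hQdef
  have hQ : IsConsistent y Q := by
    intro i j hij
    have hmono := Tuple.monotone_sort y
    have hrev : j.rev ≤ i.rev := Fin.rev_le_rev.mpr hij
    have := hmono hrev
    simpa [hQdef, Function.comp] using this
  rw [hfhat y hy Q hQ, hfhat x hx P hP, lovasz_eq_inner f P x]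
  have hle := inner_le_lovasz f hf P Q y hy hQ
  have hexp : ∑ i, gradP f P i * (y i - x i)
      = ∑ i, gradP f P i * y i - ∑ i, gradP f P i * x i := by
    rw [← Finset.sum_sub_distrib]
    exact Finset.sum_congr rfl (fun i _ => by ring)
  rw [hexp]
  linarith
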